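/- Let n ≥ 2 and let p, q : ℤⁿ → ℝ be group homomorphisms whose images are dense subgroups of ℝ. Then X_p = {g ∈ ℤⁿ : |p(g)| < 1} is a generating set of ℤⁿ, and X_p is equivalent to X_q (under mutual domination) if and only if q = λ·p for some nonzero real number λ. Consequently, for n ≥ 2 the group ℤⁿ admits at least 2^{ℵ₀} pairwise non-equivalent generating sets S for which (ℤⁿ, d_S) is quasi-isometric to ℝ. -/

import Mathlib

noncomputable section

open Metric

/-- The Gromov product of `x` and `y` at `w` with respect to a distance function `d`. -/
def gromovProd {α : Type*} (d : α → α → ℝ) (w x y : α) : ℝ :=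
  (d w x + d w y - d x y) / 2

/-- Gromov hyperbolicity via the four-point condition, for an arbitrary distance function. -/
def FourPointHyperbolic {α : Type*} (d : α → α → ℝ) : Prop :=
  ∃ δ : ℝ, 0 ≤ δ ∧ ∀ w x y z : α,
    min (gromovProd d w x z) (gromovProd d w z y) - δ ≤ gromovProd d w x y

/-- A geodesic from `x` to `y`, parametrized by arc length on `[0, dist x y]`. -/
def IsGeodesicSeg {X : Type*} [MetricSpace X] (x y : X) (f : ℝ → X) : Prop :=
  f 0 = x ∧ f (dist x y) = y ∧
    ∀ s ∈ Set.Icc (0 : ℝ) (dist x y), ∀ t ∈ Set.Icc (0 : ℝ) (dist x y),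
      dist (f s) (f t) = |s - t|

/-- A geodesic metric space: any two points are joined by a geodesic. -/
def GeodesicSpace (X : Type*) [MetricSpace X] : Prop :=
  ∀ x y : X, ∃ f : ℝ → X, IsGeodesicSeg x y f

/-- The image (as a set) of a geodesic segment from `x` to `y`. -/
def geodSet {X : Type*} [MetricSpace X] (x y : X) (f : ℝ → X) : Set X :=
  f '' Set.Icc (0 : ℝ) (dist x y)

/-- `p` lies within distance `δ` of the set `S` (i.e. in the closed `δ`-neighborhood). -/
def WithinDistOf {X : Type*} [MetricSpace X] (δ : ℝ) (p : X) (S : Set X) : Prop :=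
  ∃ q ∈ S, dist p q ≤ δ

/-- Rips condition: each side of every geodesic triangle is contained in the union of the
closed `δ`-neighborhoods of the other two sides. -/
def RipsHyperbolic (X : Type*) [MetricSpace X] (δ : ℝ) : Prop :=
  ∀ x y z : X, ∀ fxy fyz fxz : ℝ → X,
    IsGeodesicSeg x y fxy → IsGeodesicSeg y z fyz → IsGeodesicSeg x z fxz →
      (∀ p ∈ geodSet x y fxy, WithinDistOf δ p (geodSet y z fyz ∪ geodSet x z fxz)) ∧
      (∀ p ∈ geodSet y z fyz, WithinDistOf δ p (geodSet x y fxy ∪ geodSet x z fxz)) ∧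
      (∀ p ∈ geodSet x z fxz, WithinDistOf δ p (geodSet x y fxy ∪ geodSet y z fyz))

/-- An (isometric) action of a group `G` on a metric space `X`. -/
structure IsIsomAction (G : Type*) [Group G] (X : Type*) [MetricSpace X]
    (act : G → X → X) : Prop where
  act_one : ∀ x : X, act 1 x = x
  act_mul : ∀ (g h : G) (x : X), act (g * h) x = act g (act h x)
  isometry : ∀ (g : G) (x y : X), dist (act g x) (act g y) = dist x y

/-- A cobounded action: some (hence any) orbit is coarsely dense. -/
def CoboundedAction {G X : Type*} [Group G] [MetricSpace X] (act : G → X → X) : Prop :=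
  ∃ (x : X) (R : ℝ), 0 ≤ R ∧ ∀ y : X, ∃ g : G, dist y (act g x) ≤ R

/-- A quasi-isometric embedding between two "spaces" given by distance functions. -/
def IsQIEmbWith {α β : Type*} (dα : α → α → ℝ) (dβ : β → β → ℝ) (f : α → β) : Prop :=
  ∃ A B : ℝ, 1 ≤ A ∧ 0 ≤ B ∧ ∀ x y : α,
    dα x y / A - B ≤ dβ (f x) (f y) ∧ dβ (f x) (f y) ≤ A * dα x y + B

/-- The image of `f` is coarsely dense. -/
def CoarselyDenseWith {α β : Type*} (dβ : β → β → ℝ) (f : α → β) : Prop :=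
  ∃ C : ℝ, 0 ≤ C ∧ ∀ y : β, ∃ x : α, dβ (f x) y ≤ C

/-- A quasi-isometry between two "spaces" given by distance functions. -/
def IsQuasiIsometryWith {α β : Type*} (dα : α → α → ℝ) (dβ : β → β → ℝ) (f : α → β) : Prop :=
  IsQIEmbWith dα dβ f ∧ CoarselyDenseWith dβ f

/-- The standard distance on `ℤ`. -/
def zdist : ℤ → ℤ → ℝ := fun m n => |(m : ℝ) - (n : ℝ)|

/-- `g` is loxodromic for the action `act`: for some basepoint `x`, the orbit map
`n ↦ g ^ n • x` is a quasi-isometric embedding of `ℤ`. -/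
def LoxodromicWith {G α : Type*} [Group G] (d : α → α → ℝ) (act : G → α → α) (g : G) : Prop :=
  ∃ x : α, IsQIEmbWith zdist d (fun n : ℤ => act (g ^ n) x)

/-- Acylindricity of an action, with respect to a distance function. -/
def AcylindricalWith {G α : Type*} (d : α → α → ℝ) (act : G → α → α) : Prop :=
  ∀ ε : ℝ, 0 < ε → ∃ (R : ℝ) (N : ℕ), 0 ≤ R ∧ ∀ x y : α, R ≤ d x y →
    {g : G | d x (act g x) ≤ ε ∧ d y (act g y) ≤ ε}.Finite ∧
    Nat.card {g : G | d x (act g x) ≤ ε ∧ d y (act g y) ≤ ε} ≤ N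

/-- Two subsets are within finite Hausdorff distance of each other. -/
def FinHausdorffClose {α : Type*} (d : α → α → ℝ) (A B : Set α) : Prop :=
  ∃ C : ℝ, (∀ a ∈ A, ∃ b ∈ B, d a b ≤ C) ∧ (∀ b ∈ B, ∃ a ∈ A, d a b ≤ C)

/-- The positive (`pos = true`) or negative (`pos = false`) orbit ray of `g` at `x`. -/
def orbitRay {G α : Type*} [Group G] (act : G → α → α) (g : G) (x : α) (pos : Bool) : Set α :=
  Set.range fun n : ℕ => act (g ^ (if pos then (n : ℤ) else -(n : ℤ))) x

/-- Independence of two loxodromic elements with respect to the basepoint `x`: no orbit ray of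
`g` is within finite Hausdorff distance of an orbit ray of `h`. -/
def IndepWith {G α : Type*} [Group G] (d : α → α → ℝ) (act : G → α → α) (x : α)
    (g h : G) : Prop :=
  ∀ s t : Bool, ¬ FinHausdorffClose d (orbitRay act g x s) (orbitRay act h x t)

/-- A group is virtually cyclic if it has a cyclic subgroup of finite index. -/
def VirtuallyCyclic (G : Type*) [Group G] : Prop :=
  ∃ H : Subgroup G, IsCyclic ↥H ∧ H.FiniteIndex

/-- `S` is a generating set of `G`. -/
def IsGenSet {G : Type*} [Group G] (S : Set G) : Prop :=
  Subgroup.closure S = ⊤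

/-- The word length of `g` with respect to `S`: the least `n` such that `g` is a product of
`n` elements of `S ∪ S⁻¹`. -/
def wordLength {G : Type*} [Group G] (S : Set G) (g : G) : ℕ :=
  sInf {n : ℕ | ∃ l : List G, l.length = n ∧ (∀ s ∈ l, s ∈ S ∨ s⁻¹ ∈ S) ∧ l.prod = g}

/-- The word metric `d_S(g,h) = ‖g⁻¹h‖_S` on `G`. -/
def wordDist {G : Type*} [Group G] (S : Set G) : G → G → ℝ :=
  fun g h => (wordLength S (g⁻¹ * h) : ℝ)

/-- `S ⪯ T` : `S` is dominated by `T`, i.e. `sup_{t ∈ T} ‖t‖_S < ∞`. -/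
def GenSetDominated {G : Type*} [Group G] (S T : Set G) : Prop :=
  ∃ M : ℕ, ∀ t ∈ T, wordLength S t ≤ M

/-- Equivalence of generating sets: mutual domination. -/
def GenSetEquiv {G : Type*} [Group G] (S T : Set G) : Prop :=
  GenSetDominated S T ∧ GenSetDominated T S

/-- The left multiplication action of a group on itself. -/
def leftTranslation {G : Type*} [Group G] : G → G → G := fun g x => g * x

universe uX uG

/-- A bundled isometric action of `G` on a geodesic, δ-hyperbolic (Rips condition)
metric space. -/
structure GrpActHypSpace (G : Type uG) [Group G] : Type (max uG (uX + 1)) where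
  carrier : Type uX
  [inst : MetricSpace carrier]
  act : G → carrier → carrier
  isIsomAction : IsIsomAction G carrier act
  δ : ℝ
  δ_nonneg : 0 ≤ δ
  geodesic : GeodesicSpace carrier
  rips : RipsHyperbolic carrier δ

attribute [instance] GrpActHypSpace.inst

/-- Property (NL): no isometric action of `G` on a geodesic Gromov-hyperbolic metric space
has a loxodromic element. -/
def PropNL (G : Type uG) [Group G] : Prop :=
  ∀ A : GrpActHypSpace.{uX, uG} G, ∀ g : G,
    ¬ LoxodromicWith (fun a b : A.carrier => dist a b) A.act g

/-- Word length for a subset of an additive group. -/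
def addWordLength {A : Type*} [AddGroup A] (S : Set A) (a : A) : ℕ :=
  sInf {n : ℕ | ∃ l : List A, l.length = n ∧ (∀ s ∈ l, s ∈ S ∨ -s ∈ S) ∧ l.sum = a}

/-- The word metric on an additive group. -/
def addWordDist {A : Type*} [AddGroup A] (S : Set A) : A → A → ℝ :=
  fun a b => (addWordLength S (-a + b) : ℝ)

/-- `S ⪯ T` for subsets of an additive group. -/
def AddGenSetDominated {A : Type*} [AddGroup A] (S T : Set A) : Prop :=
  ∃ M : ℕ, ∀ t ∈ T, addWordLength S t ≤ M

/-- Equivalence (mutual domination) of generating sets of an additive group. -/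
def AddGenSetEquiv {A : Type*} [AddGroup A] (S T : Set A) : Prop :=
  AddGenSetDominated S T ∧ AddGenSetDominated T S

/-- Generating set of an additive group. -/
def IsAddGenSet {A : Type*} [AddGroup A] (S : Set A) : Prop :=
  AddSubgroup.closure S = ⊤

namespace Stmt15Aux

variable {n : ℕ}

lemma single_eq_smul (i : Fin n) (m : ℤ) :
    (Pi.single i m : Fin n → ℤ) = m • (Pi.single i (1 : ℤ) : Fin n → ℤ) := by
  funext j
  by_cases h : j = i
  · subst h; simp
  · simp [Pi.single_apply, h]

lemma map_single (p : (Fin n → ℤ) →+ ℝ) (i : Fin n) (m : ℤ) :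
    p (Pi.single i m) = (m : ℝ) * p (Pi.single i 1) := by
  rw [single_eq_smul, map_zsmul, zsmul_eq_mul]

lemma decomp (p : (Fin n → ℤ) →+ ℝ) (g : Fin n → ℤ) :
    p g = ∑ i, (g i : ℝ) * p (Pi.single i 1) := by
  conv_lhs => rw [← Finset.univ_sum_single g]
  rw [map_sum]
  exact Finset.sum_congr rfl fun i _ => map_single p i (g i)

lemma split (p : (Fin n → ℤ) →+ ℝ) (hp : Dense (Set.range fun g : Fin n → ℤ => p g)) :
    ∀ k : ℕ, ∀ g : Fin n → ℤ, |p g| < 2 ^ k →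
      ∃ l : List (Fin n → ℤ), l.length ≤ 2 ^ k ∧ (∀ s ∈ l, |p s| < 1) ∧ l.sum = g := by
  have hdr : DenseRange fun g : Fin n → ℤ => p g := hp
  intro k
  induction k with
  | zero =>
    intro g hg
    exact ⟨[g], by simp, by simpa using hg, by simp⟩
  | succ k ih =>
    intro g hg
    have hε : (0 : ℝ) < (2 ^ (k + 1) - |p g|) / 2 := by linarith
    obtain ⟨h, hh⟩ := hdr.exists_dist_lt (p g / 2) hε
    rw [Real.dist_eq] at hh
    have hpow : (2 : ℝ) ^ (k + 1) = 2 ^ k * 2 := pow_succ 2 k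
    have h1 : |p h| < 2 ^ k := by
      have := abs_add_le (p h - p g / 2) (p g / 2)
      have h2 : |p g / 2| = |p g| / 2 := by rw [abs_div]; norm_num
      have h3 : |p h - p g / 2| < (2 ^ (k + 1) - |p g|) / 2 := by
        rwa [abs_sub_comm] at hh
      have h4 : p h - p g / 2 + p g / 2 = p h := by ring
      rw [h4] at this
      linarith
    have h2 : |p (g - h)| < 2 ^ k := by
      rw [map_sub]
      have e : p g - p h = (p g / 2) + (p g / 2 - p h) := by ring
      have := abs_add_le (p g / 2) (p g / 2 - p h)
      have h2' : |p g / 2| = |p g| / 2 := by rw [abs_div]; norm_num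
      rw [← e] at this
      linarith
    obtain ⟨l1, hl1, hl1', hl1s⟩ := ih h h1
    obtain ⟨l2, hl2, hl2', hl2s⟩ := ih (g - h) h2
    refine ⟨l1 ++ l2, ?_, ?_, ?_⟩
    · rw [List.length_append]
      have : 2 ^ (k + 1) = 2 ^ k + 2 ^ k := by ring
      omega
    · intro s hs
      rcases List.mem_append.mp hs with hs | hs
      · exact hl1' s hs
      · exact hl2' s hs
    · rw [List.sum_append, hl1s, hl2s]; abel

lemma wl_le (p : (Fin n → ℤ) →+ ℝ) (hp : Dense (Set.range fun g : Fin n → ℤ => p g))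
    {k : ℕ} {g : Fin n → ℤ} (h : |p g| < 2 ^ k) :
    addWordLength {g : Fin n → ℤ | |p g| < 1} g ≤ 2 ^ k := by
  obtain ⟨l, hlen, hmem, hsum⟩ := split p hp k g h
  refine le_trans (Nat.sInf_le ⟨l, rfl, fun s hs => Or.inl (hmem s hs), hsum⟩) hlen

lemma abs_sum_le (p : (Fin n → ℤ) →+ ℝ) :
    ∀ l : List (Fin n → ℤ),
      (∀ s ∈ l, s ∈ {g : Fin n → ℤ | |p g| < 1} ∨ -s ∈ {g : Fin n → ℤ | |p g| < 1}) →
      |p l.sum| ≤ l.length := by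
  intro l
  induction l with
  | nil => intro _; simp
  | cons a tl ih =>
    intro hmem
    have ha : |p a| ≤ 1 := by
      rcases hmem a List.mem_cons_self with h | h
      · exact le_of_lt h
      · have : |p (-a)| < 1 := h
        rw [map_neg, abs_neg] at this
        exact le_of_lt this
    have htl := ih fun s hs => hmem s (List.mem_cons_of_mem a hs)
    calc |p (a :: tl).sum| = |p a + p tl.sum| := by rw [List.sum_cons, map_add]
      _ ≤ |p a| + |p tl.sum| := abs_add_le _ _
      _ ≤ 1 + tl.length := by linarith
      _ = ((a :: tl).length : ℝ) := by simp [List.length_cons]; ring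

lemma abs_le_wl (p : (Fin n → ℤ) →+ ℝ) (hp : Dense (Set.range fun g : Fin n → ℤ => p g))
    (g : Fin n → ℤ) : |p g| ≤ (addWordLength {g : Fin n → ℤ | |p g| < 1} g : ℝ) := by
  obtain ⟨k, hk⟩ := pow_unbounded_of_one_lt |p g| (one_lt_two (α := ℝ))
  obtain ⟨l, hlen, hmem, hsum⟩ := split p hp k g hk
  have hne : {m : ℕ | ∃ l : List (Fin n → ℤ), l.length = m ∧
      (∀ s ∈ l, s ∈ {g : Fin n → ℤ | |p g| < 1} ∨ -s ∈ {g : Fin n → ℤ | |p g| < 1}) ∧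
      l.sum = g}.Nonempty :=
    ⟨l.length, l, rfl, fun s hs => Or.inl (hmem s hs), hsum⟩
  obtain ⟨l', hl'len, hl'mem, hl'sum⟩ := Nat.sInf_mem hne
  have h5 : l'.length = addWordLength {g : Fin n → ℤ | |p g| < 1} g := hl'len
  have h6 : |p l'.sum| ≤ (l'.length : ℝ) := abs_sum_le p l' hl'mem
  rw [hl'sum, h5] at h6
  exact h6

lemma wl_linear (p : (Fin n → ℤ) →+ ℝ) (hp : Dense (Set.range fun g : Fin n → ℤ => p g))
    (g : Fin n → ℤ) :
    (addWordLength {g : Fin n → ℤ | |p g| < 1} g : ℝ) ≤ 2 * |p g| + 2 := by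
  obtain ⟨k, hk⟩ := pow_unbounded_of_one_lt |p g| (one_lt_two (α := ℝ))
  induction k with
  | zero =>
    have := wl_le p hp (k := 0) (by simpa using hk)
    have h0 : (0:ℝ) ≤ |p g| := abs_nonneg _
    have : (addWordLength {g : Fin n → ℤ | |p g| < 1} g : ℝ) ≤ 1 := by
      exact_mod_cast (by simpa only [pow_zero] using this : addWordLength {g : Fin n → ℤ | |p g| < 1} g ≤ 1)
    linarith
  | succ k ih =>
    by_cases h' : |p g| < 2 ^ k
    · exact ih h'
    · push_neg at h'
      have h1 := wl_le p hp hk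
      have h2 : ((2 ^ (k+1) : ℕ) : ℝ) ≤ 2 * |p g| := by
        push_cast
        rw [pow_succ]
        nlinarith [h']
      have : (addWordLength {g : Fin n → ℤ | |p g| < 1} g : ℝ) ≤ ((2 ^ (k+1) : ℕ) : ℝ) :=
        Nat.cast_le.2 h1
      linarith


lemma gen (p : (Fin n → ℤ) →+ ℝ) (hp : Dense (Set.range fun g : Fin n → ℤ => p g)) :
    IsAddGenSet {g : Fin n → ℤ | |p g| < 1} := by
  rw [IsAddGenSet, eq_top_iff]
  intro g _
  obtain ⟨k, hk⟩ := pow_unbounded_of_one_lt |p g| (one_lt_two (α := ℝ))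
  obtain ⟨l, _, hmem, hsum⟩ := split p hp k g hk
  rw [← hsum]
  exact AddSubgroup.list_sum_mem _ fun s hs => AddSubgroup.subset_closure (hmem s hs)

lemma dom_of_bound (p q : (Fin n → ℤ) →+ ℝ)
    (hp : Dense (Set.range fun g : Fin n → ℤ => p g)) (C : ℝ)
    (hC : ∀ g : Fin n → ℤ, |q g| < 1 → |p g| < C) :
    AddGenSetDominated {g : Fin n → ℤ | |p g| < 1} {g : Fin n → ℤ | |q g| < 1} := by
  obtain ⟨k, hk⟩ := pow_unbounded_of_one_lt C (one_lt_two (α := ℝ))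
  exact ⟨2 ^ k, fun t ht => wl_le p hp (lt_trans (hC t ht) hk)⟩

lemma bound_of_dom (p q : (Fin n → ℤ) →+ ℝ)
    (hp : Dense (Set.range fun g : Fin n → ℤ => p g))
    (h : AddGenSetDominated {g : Fin n → ℤ | |p g| < 1} {g : Fin n → ℤ | |q g| < 1}) :
    ∃ M : ℝ, ∀ g : Fin n → ℤ, |q g| < 1 → |p g| ≤ M := by
  obtain ⟨M, hM⟩ := h
  exact ⟨M, fun g hg => (abs_le_wl p hp g).trans (Nat.cast_le.2 (hM g hg))⟩

/-- The key rigidity lemma: if `|p|` is bounded on `{|q| < 1}`, the values of `p` and `q`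
on basis vectors satisfy the proportionality relations. -/
lemma commutation (p q : (Fin n → ℤ) →+ ℝ) (M : ℝ)
    (hM : ∀ g : Fin n → ℤ, |q g| < 1 → |p g| ≤ M) (i j : Fin n) :
    p (Pi.single i 1) * q (Pi.single j 1) = p (Pi.single j 1) * q (Pi.single i 1) := by
  by_contra hd
  have hij : i ≠ j := by rintro rfl; exact hd rfl
  set pi := p (Pi.single i 1) with hpi
  set pj := p (Pi.single j 1) with hpj
  set qi := q (Pi.single i 1) with hqi
  set qj := q (Pi.single j 1) with hqj
  have hd0 : pi * qj - pj * qi ≠ 0 := sub_ne_zero.mpr hd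
  have hdpos : 0 < |pi * qj - pj * qi| := abs_pos.mpr hd0
  -- the two-parameter family of group elements
  have hpg : ∀ m k : ℤ, p (Pi.single i m + Pi.single j k) = (m : ℝ) * pi + (k : ℝ) * pj := by
    intro m k; rw [map_add, map_single p i m, map_single p j k]
  have hqg : ∀ m k : ℤ, q (Pi.single i m + Pi.single j k) = (m : ℝ) * qi + (k : ℝ) * qj := by
    intro m k; rw [map_add, map_single q i m, map_single q j k]
  -- box bound
  have box : ∀ m k : ℤ, |(m : ℝ) * qi + (k : ℝ) * qj| < 1 →
      |(m : ℝ)| * |pi * qj - pj * qi| ≤ M * |qj| + |pj| ∧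
      |(k : ℝ)| * |pi * qj - pj * qi| ≤ M * |qi| + |pi| := by
    intro m k h1
    have h2 : |(m : ℝ) * pi + (k : ℝ) * pj| ≤ M := by
      have := hM (Pi.single i m + Pi.single j k) (by rw [hqg]; exact h1)
      rwa [hpg] at this
    constructor
    · have e : (m : ℝ) * (pi * qj - pj * qi) =
          ((m : ℝ) * pi + (k : ℝ) * pj) * qj - ((m : ℝ) * qi + (k : ℝ) * qj) * pj := by ring
      have c1 : |((m : ℝ) * pi + (k : ℝ) * pj) * qj| ≤ M * |qj| :=
        (abs_mul _ _).le.trans (mul_le_mul_of_nonneg_right h2 (abs_nonneg _))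
      have c2 : |((m : ℝ) * qi + (k : ℝ) * qj) * pj| ≤ 1 * |pj| :=
        (abs_mul _ _).le.trans (mul_le_mul_of_nonneg_right h1.le (abs_nonneg _))
      calc |(m : ℝ)| * |pi * qj - pj * qi| = |(m : ℝ) * (pi * qj - pj * qi)| :=
            (abs_mul _ _).symm
        _ = |((m : ℝ) * pi + (k : ℝ) * pj) * qj - ((m : ℝ) * qi + (k : ℝ) * qj) * pj| := by
            rw [e]
        _ ≤ |((m : ℝ) * pi + (k : ℝ) * pj) * qj| + |((m : ℝ) * qi + (k : ℝ) * qj) * pj| :=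
            abs_sub _ _
        _ ≤ M * |qj| + |pj| := by linarith
    · have e : (k : ℝ) * (pi * qj - pj * qi) =
          ((m : ℝ) * qi + (k : ℝ) * qj) * pi - ((m : ℝ) * pi + (k : ℝ) * pj) * qi := by ring
      have c1 : |((m : ℝ) * pi + (k : ℝ) * pj) * qi| ≤ M * |qi| :=
        (abs_mul _ _).le.trans (mul_le_mul_of_nonneg_right h2 (abs_nonneg _))
      have c2 : |((m : ℝ) * qi + (k : ℝ) * qj) * pi| ≤ 1 * |pi| :=
        (abs_mul _ _).le.trans (mul_le_mul_of_nonneg_right h1.le (abs_nonneg _))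
      calc |(k : ℝ)| * |pi * qj - pj * qi| = |(k : ℝ) * (pi * qj - pj * qi)| :=
            (abs_mul _ _).symm
        _ = |((m : ℝ) * qi + (k : ℝ) * qj) * pi - ((m : ℝ) * pi + (k : ℝ) * pj) * qi| := by
            rw [e]
        _ ≤ |((m : ℝ) * qi + (k : ℝ) * qj) * pi| + |((m : ℝ) * pi + (k : ℝ) * pj) * qi| :=
            abs_sub _ _
        _ ≤ M * |qi| + |pi| := by linarith
  rcases AddSubgroup.dense_or_cyclic (AddSubgroup.closure ({qi, qj} : Set ℝ)) with hdense | ⟨a, ha⟩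
  · -- dense case: a finite set of positive reals has a minimum, contradicting density
    have hpos : ∀ ε : ℝ, 0 < ε →
        ∃ x : ℝ, x ∈ AddSubgroup.closure ({qi, qj} : Set ℝ) ∧ 0 < x ∧ x < ε := by
      intro ε hε
      obtain ⟨x, hx, hdist⟩ := Metric.mem_closure_iff.mp (hdense (ε / 2)) (ε / 2) (by linarith)
      rw [Real.dist_eq] at hdist
      rcases abs_lt.mp hdist with ⟨h1, h2⟩
      exact ⟨x, hx, by linarith, by linarith⟩
    set C1 : ℤ := ⌈(M * |qj| + |pj|) / |pi * qj - pj * qi|⌉ with hC1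
    set C2 : ℤ := ⌈(M * |qi| + |pi|) / |pi * qj - pj * qi|⌉ with hC2
    have hbox2 : ∀ m k : ℤ, |(m : ℝ) * qi + (k : ℝ) * qj| < 1 →
        m ∈ Set.Icc (-C1) C1 ∧ k ∈ Set.Icc (-C2) C2 := by
      intro m k h1
      obtain ⟨b1, b2⟩ := box m k h1
      constructor
      · have h3 : |(m : ℝ)| ≤ (C1 : ℝ) :=
          ((le_div_iff₀ hdpos).mpr b1).trans (Int.le_ceil _)
        rw [← Int.cast_abs, Int.cast_le] at h3
        exact Set.mem_Icc.mpr (abs_le.mp h3)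
      · have h3 : |(k : ℝ)| ≤ (C2 : ℝ) :=
          ((le_div_iff₀ hdpos).mpr b2).trans (Int.le_ceil _)
        rw [← Int.cast_abs, Int.cast_le] at h3
        exact Set.mem_Icc.mpr (abs_le.mp h3)
    set S := {x : ℝ | x ∈ AddSubgroup.closure ({qi, qj} : Set ℝ) ∧ 0 < x ∧ x < 1} with hS
    have hSsub : S ⊆ (fun mk : ℤ × ℤ => (mk.1 : ℝ) * qi + (mk.2 : ℝ) * qj) ''
        (Set.Icc (-C1) C1 ×ˢ Set.Icc (-C2) C2) := by
      rintro x ⟨hxA, hx0, hx1⟩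
      obtain ⟨m, k, hmk⟩ := (AddSubgroup.mem_closure_pair).mp hxA
      have hx : (m : ℝ) * qi + (k : ℝ) * qj = x := by
        rw [← hmk]; push_cast [zsmul_eq_mul]; ring
      have habs : |(m : ℝ) * qi + (k : ℝ) * qj| < 1 := by
        rw [hx, abs_lt]; constructor <;> linarith
      obtain ⟨hm, hk⟩ := hbox2 m k habs
      exact ⟨(m, k), Set.mem_prod.mpr ⟨hm, hk⟩, hx⟩
    have hSfin : S.Finite :=
      Set.Finite.subset
        (Set.Finite.image _ ((Set.finite_Icc _ _).prod (Set.finite_Icc _ _))) hSsub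
    have hSne : S.Nonempty := by
      obtain ⟨x, h1, h2, h3⟩ := hpos 1 one_pos
      exact ⟨x, h1, h2, h3⟩
    obtain ⟨x0, hx0S, hmin⟩ := Set.exists_min_image S id hSfin hSne
    obtain ⟨y, hyA, hy0, hyx⟩ := hpos x0 hx0S.2.1
    have hyS : y ∈ S := ⟨hyA, hy0, hyx.trans hx0S.2.2⟩
    exact absurd (hmin y hyS) (not_le.mpr hyx)
  · -- cyclic case
    have hqiA : qi ∈ AddSubgroup.closure ({qi, qj} : Set ℝ) :=
      AddSubgroup.subset_closure (by simp)
    have hqjA : qj ∈ AddSubgroup.closure ({qi, qj} : Set ℝ) :=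
      AddSubgroup.subset_closure (by simp)
    rw [ha, AddSubgroup.mem_closure_singleton] at hqiA hqjA
    obtain ⟨ki, hki⟩ := hqiA
    obtain ⟨kj, hkj⟩ := hqjA
    have hzero : ∀ t : ℤ, |((t * kj : ℤ) : ℝ) * qi + ((-(t * ki) : ℤ) : ℝ) * qj| < 1 := by
      intro t
      have he : ((t * kj : ℤ) : ℝ) * qi + ((-(t * ki) : ℤ) : ℝ) * qj = 0 := by
        rw [← hki, ← hkj]; push_cast [zsmul_eq_mul]; ring
      rw [he]; norm_num
    by_cases hkj0 : kj = 0
    · by_cases hki0 : ki = 0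
      · apply hd0
        have e1 : qi = 0 := by rw [← hki, hki0, zero_zsmul]
        have e2 : qj = 0 := by rw [← hkj, hkj0, zero_zsmul]
        rw [e1, e2]; ring
      · obtain ⟨t, ht⟩ := exists_nat_gt ((M * |qi| + |pi|) / |pi * qj - pj * qi|)
        have hb := (box ((t : ℤ) * kj) (-((t : ℤ) * ki)) (hzero (t : ℤ))).2
        have habs : (t : ℝ) ≤ |((-((t : ℤ) * ki) : ℤ) : ℝ)| := by
          rw [← Int.cast_abs]
          have h1 : (t : ℤ) ≤ |(-((t : ℤ) * ki))| := by
            rw [abs_neg, abs_mul]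
            have : 1 ≤ |ki| := Int.one_le_abs hki0
            have h2 : |(t : ℤ)| = (t : ℤ) := abs_of_nonneg (by positivity)
            nlinarith [abs_nonneg ((t : ℤ))]
          exact_mod_cast h1
        have hlt : M * |qi| + |pi| < (t : ℝ) * |pi * qj - pj * qi| :=
          (div_lt_iff₀ hdpos).mp ht
        have hle : (t : ℝ) * |pi * qj - pj * qi| ≤
            |((-((t : ℤ) * ki) : ℤ) : ℝ)| * |pi * qj - pj * qi| :=
          mul_le_mul_of_nonneg_right habs (abs_nonneg _)
        linarith
    · obtain ⟨t, ht⟩ := exists_nat_gt ((M * |qj| + |pj|) / |pi * qj - pj * qi|)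
      have hb := (box ((t : ℤ) * kj) (-((t : ℤ) * ki)) (hzero (t : ℤ))).1
      have habs : (t : ℝ) ≤ |(((t : ℤ) * kj : ℤ) : ℝ)| := by
        rw [← Int.cast_abs]
        have h1 : (t : ℤ) ≤ |((t : ℤ) * kj)| := by
          rw [abs_mul]
          have : 1 ≤ |kj| := Int.one_le_abs hkj0
          have h2 : |(t : ℤ)| = (t : ℤ) := abs_of_nonneg (by positivity)
          nlinarith [abs_nonneg ((t : ℤ))]
        exact_mod_cast h1
      have hlt : M * |qj| + |pj| < (t : ℝ) * |pi * qj - pj * qi| :=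
        (div_lt_iff₀ hdpos).mp ht
      have hle : (t : ℝ) * |pi * qj - pj * qi| ≤
          |(((t : ℤ) * kj : ℤ) : ℝ)| * |pi * qj - pj * qi| :=
        mul_le_mul_of_nonneg_right habs (abs_nonneg _)
      linarith


lemma exists_ne (p : (Fin n → ℤ) →+ ℝ) (hp : Dense (Set.range fun g : Fin n → ℤ => p g)) :
    ∃ i : Fin n, p (Pi.single i 1) ≠ 0 := by
  by_contra h
  push_neg at h
  have hz : ∀ g : Fin n → ℤ, p g = 0 := by
    intro g
    rw [decomp]
    exact Finset.sum_eq_zero fun i _ => by rw [h i, mul_zero]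
  have h1 : (1 : ℝ) ∈ closure (Set.range fun g : Fin n → ℤ => p g) := hp 1
  have hsub : (Set.range fun g : Fin n → ℤ => p g) ⊆ {0} := by
    rintro x ⟨g, rfl⟩; exact hz g
  have := closure_minimal hsub isClosed_singleton h1
  simp at this

lemma lam_of_comm (p q : (Fin n → ℤ) →+ ℝ)
    (hp : Dense (Set.range fun g : Fin n → ℤ => p g))
    (hq : Dense (Set.range fun g : Fin n → ℤ => q g))
    (hc : ∀ i j : Fin n, p (Pi.single i 1) * q (Pi.single j 1)
      = p (Pi.single j 1) * q (Pi.single i 1)) :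
    ∃ lam : ℝ, lam ≠ 0 ∧ ∀ g : Fin n → ℤ, q g = lam * p g := by
  obtain ⟨i0, hi0⟩ := exists_ne p hp
  refine ⟨q (Pi.single i0 1) / p (Pi.single i0 1), ?_, ?_⟩
  · obtain ⟨j0, hj0⟩ := exists_ne q hq
    have := hc i0 j0
    intro hzero
    rw [div_eq_zero_iff] at hzero
    rcases hzero with hz | hz
    · -- q i0 = 0, then p i0 * q j0 = p j0 * q i0 = 0, so q j0 = 0, contradiction
      apply hj0
      have : p (Pi.single i0 1) * q (Pi.single j0 1) = 0 := by rw [this, hz, mul_zero]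
      rcases mul_eq_zero.mp this with h | h
      · exact absurd h hi0
      · exact h
    · exact hi0 hz
  · intro g
    rw [decomp p g, decomp q g, Finset.mul_sum]
    apply Finset.sum_congr rfl
    intro j _
    have hcomm := hc i0 j
    field_simp
    linear_combination (g j : ℝ) * hcomm


lemma dom_self {A : Type*} [AddGroup A] (S : Set A) : AddGenSetDominated S S := by
  refine ⟨1, fun t ht => ?_⟩
  refine Nat.sInf_le ⟨[t], rfl, ?_, by simp⟩
  intro s hs
  rw [List.mem_singleton] at hs
  subst hs
  exact Or.inl ht

lemma main_iff (p q : (Fin n → ℤ) →+ ℝ)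
    (hp : Dense (Set.range fun g : Fin n → ℤ => p g))
    (hq : Dense (Set.range fun g : Fin n → ℤ => q g)) :
    AddGenSetEquiv {g : Fin n → ℤ | |p g| < 1} {g : Fin n → ℤ | |q g| < 1} ↔
      ∃ lam : ℝ, lam ≠ 0 ∧ ∀ g : Fin n → ℤ, q g = lam * p g := by
  constructor
  · rintro ⟨h1, _⟩
    obtain ⟨M, hM⟩ := bound_of_dom p q hp h1
    exact lam_of_comm p q hp hq (commutation p q M hM)
  · rintro ⟨lam, hlam, hpq⟩
    have hl : 0 < |lam| := abs_pos.mpr hlam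
    constructor
    · apply dom_of_bound p q hp (1 / |lam| + 1)
      intro g hg
      rw [hpq g, abs_mul] at hg
      have h2 : |p g| < 1 / |lam| := by
        rw [lt_div_iff₀ hl]; nlinarith [abs_nonneg (p g)]
      linarith
    · apply dom_of_bound q p hq (|lam| + 1)
      intro g hg
      rw [hpq g, abs_mul]
      nlinarith [abs_nonneg (p g)]

lemma qi (p : (Fin n → ℤ) →+ ℝ) (hp : Dense (Set.range fun g : Fin n → ℤ => p g)) :
    IsQuasiIsometryWith (addWordDist {g : Fin n → ℤ | |p g| < 1})
      (fun a b : ℝ => dist a b) (fun g : Fin n → ℤ => p g) := by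
  constructor
  · refine ⟨2, 1, one_le_two, zero_le_one, fun x y => ?_⟩
    have hw := wl_linear p hp (-x + y)
    have hl := abs_le_wl p hp (-x + y)
    have hnn : (0 : ℝ) ≤ (addWordLength {g : Fin n → ℤ | |p g| < 1} (-x + y) : ℝ) :=
      Nat.cast_nonneg _
    have hpv : |p (-x + y)| = dist (p x) (p y) := by
      rw [Real.dist_eq, map_add, map_neg, abs_sub_comm]
      congr 1
      ring
    constructor
    · show addWordDist {g : Fin n → ℤ | |p g| < 1} x y / 2 - 1 ≤ dist (p x) (p y)
      rw [← hpv]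
      unfold addWordDist
      linarith
    · show dist (p x) (p y) ≤ 2 * addWordDist {g : Fin n → ℤ | |p g| < 1} x y + 1
      rw [← hpv]
      unfold addWordDist
      linarith
  · refine ⟨1, zero_le_one, fun y => ?_⟩
    obtain ⟨x, hx, hdist⟩ := Metric.mem_closure_iff.mp (hp y) 1 one_pos
    obtain ⟨g, rfl⟩ := hx
    refine ⟨g, ?_⟩
    show dist (p g) y ≤ 1
    rw [dist_comm]
    exact hdist.le

def phi (hn : 2 ≤ n) (t : ℝ) : (Fin n → ℤ) →+ ℝ where
  toFun g := ((g ⟨0, by omega⟩ : ℤ) : ℝ) + t * ((g ⟨1, by omega⟩ : ℤ) : ℝ)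
  map_zero' := by simp
  map_add' g h := by
    simp only [Pi.add_apply]
    push_cast
    ring

lemma phi_single0 (hn : 2 ≤ n) (t : ℝ) :
    phi hn t (Pi.single ⟨0, by omega⟩ (1 : ℤ)) = 1 := by
  simp [phi, Pi.single_apply, Fin.ext_iff]

lemma phi_single1 (hn : 2 ≤ n) (t : ℝ) :
    phi hn t (Pi.single ⟨1, by omega⟩ (1 : ℤ)) = t := by
  simp [phi, Pi.single_apply, Fin.ext_iff]

lemma phi_dense (hn : 2 ≤ n) {t : ℝ} (ht : Irrational t) :
    Dense (Set.range fun g : Fin n → ℤ => phi hn t g) := by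
  rcases AddSubgroup.dense_or_cyclic (phi hn t).range with hd | ⟨a, ha⟩
  · rwa [AddMonoidHom.coe_range] at hd
  · exfalso
    have h1 : (1 : ℝ) ∈ (phi hn t).range := ⟨Pi.single ⟨0, by omega⟩ 1, phi_single0 hn t⟩
    have h2 : t ∈ (phi hn t).range := ⟨Pi.single ⟨1, by omega⟩ 1, phi_single1 hn t⟩
    rw [ha, AddSubgroup.mem_closure_singleton] at h1 h2
    obtain ⟨m, hm⟩ := h1
    obtain ⟨k, hk⟩ := h2
    have hm0 : m ≠ 0 := by rintro rfl; simp at hm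
    apply ht
    refine ⟨(k : ℚ) / (m : ℚ), ?_⟩
    have hmR : ((m : ℤ) : ℝ) ≠ 0 := Int.cast_ne_zero.mpr hm0
    push_cast
    rw [div_eq_iff hmR]
    rw [zsmul_eq_mul] at hm hk
    linear_combination (m : ℝ) * hk - (k : ℝ) * hm


lemma phi_inj (hn : 2 ≤ n) {t t' : ℝ} (ht : Irrational t) (ht' : Irrational t')
    (h : AddGenSetEquiv {g : Fin n → ℤ | |phi hn t g| < 1}
      {g : Fin n → ℤ | |phi hn t' g| < 1}) : t = t' := by
  obtain ⟨lam, hlam, hl⟩ := (main_iff _ _ (phi_dense hn ht) (phi_dense hn ht')).mp h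
  have e0 := hl (Pi.single ⟨0, by omega⟩ 1)
  rw [phi_single0, phi_single0] at e0
  have e1 := hl (Pi.single ⟨1, by omega⟩ 1)
  rw [phi_single1, phi_single1] at e1
  rw [mul_one] at e0
  have : t' = t := by rw [e1, ← e0, one_mul]
  exact this.symm

end Stmt15Aux

/-- lineal structures on `ℤⁿ` coming from homomorphisms to `ℝ` with dense
image, and the resulting `2^{ℵ₀}` inequivalent generating sets quasi-isometric to `ℝ`. -/
theorem stmt_15 (n : ℕ) (hn : 2 ≤ n) (p q : (Fin n → ℤ) →+ ℝ)
    (hp : Dense (Set.range fun g => p g)) (hq : Dense (Set.range fun g => q g)) :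
    IsAddGenSet {g : Fin n → ℤ | |p g| < 1} ∧
    (AddGenSetEquiv {g : Fin n → ℤ | |p g| < 1} {g : Fin n → ℤ | |q g| < 1} ↔
      ∃ lam : ℝ, lam ≠ 0 ∧ ∀ g : Fin n → ℤ, q g = lam * p g) ∧
    ∃ F : Set (Set (Fin n → ℤ)), Cardinal.continuum ≤ Cardinal.mk F ∧
      (F.Pairwise fun S T => ¬ AddGenSetEquiv S T) ∧
      ∀ S ∈ F, IsAddGenSet S ∧
        ∃ f : (Fin n → ℤ) → ℝ, IsQuasiIsometryWith (addWordDist S) (fun a b : ℝ => dist a b) f := by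
  classical
  refine ⟨Stmt15Aux.gen p hp, Stmt15Aux.main_iff p q hp hq, ?_⟩
  refine ⟨(fun t : ℝ => {g : Fin n → ℤ | |Stmt15Aux.phi hn t g| < 1}) '' {t : ℝ | Irrational t},
    ?_, ?_, ?_⟩
  · have hinj : Set.InjOn (fun t : ℝ => {g : Fin n → ℤ | |Stmt15Aux.phi hn t g| < 1})
        {t : ℝ | Irrational t} := by
      intro t ht t' ht' hst
      have hst' : {g : Fin n → ℤ | |Stmt15Aux.phi hn t g| < 1}
          = {g : Fin n → ℤ | |Stmt15Aux.phi hn t' g| < 1} := hst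
      have hequiv : AddGenSetEquiv {g : Fin n → ℤ | |Stmt15Aux.phi hn t g| < 1}
          {g : Fin n → ℤ | |Stmt15Aux.phi hn t' g| < 1} := by
        rw [hst']
        exact ⟨Stmt15Aux.dom_self _, Stmt15Aux.dom_self _⟩
      exact Stmt15Aux.phi_inj hn ht ht' hequiv
    rw [Cardinal.mk_image_eq_of_injOn _ _ hinj]
    have he : {t : ℝ | Irrational t} = (Set.range ((↑) : ℚ → ℝ))ᶜ := rfl
    rw [he, Cardinal.mk_compl_of_infinite, Cardinal.mk_real]
    rw [Cardinal.mk_real]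
    exact lt_of_le_of_lt Cardinal.mk_range_le
      (by rw [Cardinal.mk_denumerable]; exact Cardinal.aleph0_lt_continuum)
  · rintro S ⟨t, ht, rfl⟩ T ⟨t', ht', rfl⟩ hST hequiv
    exact hST (congrArg (fun t : ℝ => {g : Fin n → ℤ | |Stmt15Aux.phi hn t g| < 1})
      (Stmt15Aux.phi_inj hn ht ht' hequiv))
  · rintro S ⟨t, ht, rfl⟩
    exact ⟨Stmt15Aux.gen _ (Stmt15Aux.phi_dense hn ht),
      ⟨fun g => Stmt15Aux.phi hn t g, Stmt15Aux.qi _ (Stmt15Aux.phi_dense hn ht)⟩⟩
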